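/- Simplex integral formula: for every h > -1, every t > 0, and every n ≥ 1, the integral over the simplex T_n(t) = {(s_1,…,s_n) : 0 < s_1 < ⋯ < s_n < t} of the product [(t - s_n)(s_n - s_{n-1}) ⋯ (s_2 - s_1)]^h equals Γ(1+h)^n · t^{n(1+h)} / Γ(n(1+h)+1). -/

import Mathlib

open MeasureTheory Set

lemma betaIntegrable {p q b : ℝ} (hp : -1 < p) (hq : -1 < q) (hb : 0 < b) :
    IntervalIntegrable (fun x => x ^ p * (b - x) ^ q) volume 0 b := by
  have h1 : IntervalIntegrable (fun x => x ^ p * (b - x) ^ q) volume 0 (b / 2) := by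
    have hint : IntervalIntegrable (fun x : ℝ => x ^ p) volume 0 (b / 2) :=
      intervalIntegral.intervalIntegrable_rpow' hp
    have hcont : ContinuousOn (fun x : ℝ => (b - x) ^ q) (uIcc 0 (b / 2)) := by
      apply ContinuousOn.rpow_const (by fun_prop)
      intro x hx
      rw [uIcc_of_le (by linarith)] at hx
      left; intro hc; nlinarith [hx.1, hx.2]
    exact hint.mul_continuousOn hcont
  have h2 : IntervalIntegrable (fun x => x ^ p * (b - x) ^ q) volume (b / 2) b := by
    have hint : IntervalIntegrable (fun x : ℝ => (b - x) ^ q) volume (b / 2) b := by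
      have : IntervalIntegrable (fun x : ℝ => x ^ q) volume 0 (b / 2) :=
        intervalIntegral.intervalIntegrable_rpow' hq
      have := (this.comp_sub_left b).symm
      norm_num at this
      have he : b - b / 2 = b / 2 := by ring
      rwa [he] at this
    have hcont : ContinuousOn (fun x : ℝ => x ^ p) (uIcc (b / 2) b) := by
      apply ContinuousOn.rpow_const (by fun_prop)
      intro x hx
      rw [uIcc_of_le (by linarith)] at hx
      left; intro hc; nlinarith [hx.1, hx.2]
    exact hint.continuousOn_mul hcont
  exact h1.trans h2

lemma betaReal {p q b : ℝ} (hp : -1 < p) (hq : -1 < q) (hb : 0 < b) :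
    ∫ x in (0:ℝ)..b, x ^ p * (b - x) ^ q
      = Real.Gamma (p + 1) * Real.Gamma (q + 1) / Real.Gamma (p + q + 2) * b ^ (p + q + 1) := by
  have hp' : 0 < ((p:ℂ) + 1).re := by simp; linarith
  have hq' : 0 < ((q:ℂ) + 1).re := by simp; linarith
  have hbeta := Complex.Gamma_mul_Gamma_eq_betaIntegral hp' hq'
  have hscaled := Complex.betaIntegral_scaled ((p:ℂ) + 1) ((q:ℂ) + 1) hb
  have hGne : Complex.Gamma ((p:ℂ) + 1 + ((q:ℂ) + 1)) ≠ 0 := by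
    have : ((p:ℂ) + 1 + ((q:ℂ) + 1)) = ((p + q + 2 : ℝ) : ℂ) := by push_cast; ring
    rw [this, Complex.Gamma_ofReal]
    exact_mod_cast (Real.Gamma_pos_of_pos (by linarith)).ne'
  -- identify the complex integral with the real one
  have hint : ∫ x in (0:ℝ)..b, (x:ℂ) ^ ((p:ℂ) + 1 - 1) * ((b:ℂ) - x) ^ ((q:ℂ) + 1 - 1)
      = ((∫ x in (0:ℝ)..b, x ^ p * (b - x) ^ q : ℝ) : ℂ) := by
    rw [← intervalIntegral.integral_ofReal]
    apply intervalIntegral.integral_congr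
    intro x hx
    rw [uIcc_of_le hb.le] at hx
    have hx0 : (0:ℝ) ≤ x := hx.1
    have hbx : (0:ℝ) ≤ b - x := by linarith [hx.2]
    have e1 : ((p:ℂ) + 1 - 1) = ((p : ℝ) : ℂ) := by ring
    have e2 : ((q:ℂ) + 1 - 1) = ((q : ℝ) : ℂ) := by ring
    simp only [e1, e2, show ((b:ℂ) - (x:ℂ)) = ((b - x : ℝ):ℂ) by push_cast; ring,
      ← Complex.ofReal_cpow hx0, ← Complex.ofReal_cpow hbx, ← Complex.ofReal_mul]
  rw [hint] at hscaled
  have hbetaval : Complex.betaIntegral ((p:ℂ) + 1) ((q:ℂ) + 1)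
      = Complex.Gamma ((p:ℂ)+1) * Complex.Gamma ((q:ℂ)+1) / Complex.Gamma ((p:ℂ) + 1 + ((q:ℂ) + 1)) := by
    rw [eq_div_iff hGne]
    linear_combination -hbeta
  rw [hbetaval] at hscaled
  have hbc : ((b:ℂ)) ^ ((p:ℂ) + 1 + ((q:ℂ) + 1) - 1) = ((b ^ (p + q + 1) : ℝ) : ℂ) := by
    have e : ((p:ℂ) + 1 + ((q:ℂ) + 1) - 1) = ((p + q + 1 : ℝ) : ℂ) := by push_cast; ring
    rw [e, ← Complex.ofReal_cpow hb.le]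
  have hg1 : Complex.Gamma ((p:ℂ)+1) = ((Real.Gamma (p+1) : ℝ) : ℂ) := by
    rw [show ((p:ℂ)+1) = ((p+1:ℝ):ℂ) by push_cast; ring, Complex.Gamma_ofReal]
  have hg2 : Complex.Gamma ((q:ℂ)+1) = ((Real.Gamma (q+1) : ℝ) : ℂ) := by
    rw [show ((q:ℂ)+1) = ((q+1:ℝ):ℂ) by push_cast; ring, Complex.Gamma_ofReal]
  have hg3 : Complex.Gamma ((p:ℂ) + 1 + ((q:ℂ) + 1)) = ((Real.Gamma (p+q+2) : ℝ) : ℂ) := by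
    rw [show ((p:ℂ) + 1 + ((q:ℂ) + 1)) = ((p+q+2:ℝ):ℂ) by push_cast; ring, Complex.Gamma_ofReal]
  rw [hbc, hg1, hg2, hg3] at hscaled
  have := hscaled
  rw [show ((b ^ (p+q+1):ℝ):ℂ) * (((Real.Gamma (p+1):ℝ):ℂ) * ((Real.Gamma (q+1):ℝ):ℂ) / ((Real.Gamma (p+q+2):ℝ):ℂ))
      = (((Real.Gamma (p+1) * Real.Gamma (q+1) / Real.Gamma (p+q+2) * b ^ (p+q+1) : ℝ)):ℂ) by push_cast; ring] at this
  exact_mod_cast this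

lemma lintegral_beta {p q b : ℝ} (hp : -1 < p) (hq : -1 < q) (hb : 0 < b) :
    ∫⁻ x : ℝ, Set.indicator (Set.Ioo 0 b) (fun x => ENNReal.ofReal (x ^ p * (b - x) ^ q)) x
      = ENNReal.ofReal
          (Real.Gamma (p + 1) * Real.Gamma (q + 1) / Real.Gamma (p + q + 2) * b ^ (p + q + 1)) := by
  rw [lintegral_indicator measurableSet_Ioo]
  rw [← ofReal_integral_eq_lintegral_ofReal]
  · rw [← betaReal hp hq hb, intervalIntegral.integral_of_le hb.le,
      MeasureTheory.integral_Ioc_eq_integral_Ioo]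
  · have := (betaIntegrable hp hq hb).1
    exact this.mono_set Set.Ioo_subset_Ioc_self
  · filter_upwards [ae_restrict_mem measurableSet_Ioo] with x hx
    exact mul_nonneg (Real.rpow_nonneg hx.1.le p) (Real.rpow_nonneg (by linarith [hx.2]) q)

lemma measurable_rpow_const (c : ℝ) : Measurable fun x : ℝ => x ^ c := by
  have heq : (fun x : ℝ => x ^ c) = fun x =>
      if x = 0 then (if c = 0 then 1 else 0)
      else if x < 0 then Real.exp (Real.log x * c) * Real.cos (c * Real.pi)
      else Real.exp (Real.log x * c) := by
    ext x
    rcases lt_trichotomy x 0 with hx | hx | hx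
    · rw [if_neg hx.ne, if_pos hx, Real.rpow_def_of_neg hx, mul_comm c]
    · subst hx
      rcases eq_or_ne c 0 with hc | hc
      · simp [hc]
      · simp [hc, Real.zero_rpow hc]
    · rw [if_neg hx.ne', if_neg (not_lt.mpr hx.le), Real.rpow_def_of_pos hx]
  rw [heq]
  refine Measurable.ite ?_ measurable_const (Measurable.ite ?_ ?_ ?_)
  · exact measurableSet_eq_fun measurable_id measurable_const
  · exact measurableSet_lt measurable_id measurable_const
  · exact (Real.measurable_exp.comp (Real.measurable_log.mul measurable_const)).mul
      measurable_const
  · exact Real.measurable_exp.comp (Real.measurable_log.mul measurable_const)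

lemma Measurable.rpow_const' {α : Type*} [MeasurableSpace α] {f : α → ℝ}
    (hf : Measurable f) (c : ℝ) : Measurable fun x => f x ^ c :=
  (measurable_rpow_const c).comp hf

def SS (n : ℕ) (t : ℝ) : Set (Fin n → ℝ) :=
  {s | (∀ i, 0 < s i) ∧ (∀ i j : Fin n, i < j → s i < s j) ∧ ∀ i, s i < t}

noncomputable def pF (n : ℕ) (h t : ℝ) (s : Fin n → ℝ) : ℝ :=
  ∏ i : Fin n, ((if hi : (i : ℕ) + 1 < n then s ⟨(i : ℕ) + 1, hi⟩ else t) - s i) ^ h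

lemma measurableSet_SS (n : ℕ) (t : ℝ) : MeasurableSet (SS n t) := by
  have : SS n t = (⋂ i, {s : Fin n → ℝ | 0 < s i}) ∩
      ((⋂ i, ⋂ j, ⋂ (_ : i < j), {s : Fin n → ℝ | s i < s j}) ∩
        ⋂ i, {s : Fin n → ℝ | s i < t}) := by
    ext s; simp only [SS, mem_setOf_eq, mem_inter_iff, mem_iInter]
  rw [this]
  refine (MeasurableSet.iInter fun i => measurableSet_lt measurable_const
      (measurable_pi_apply i)).inter (MeasurableSet.inter ?_ ?_)
  · exact MeasurableSet.iInter fun i => MeasurableSet.iInter fun j =>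
      MeasurableSet.iInter fun _ =>
        measurableSet_lt (measurable_pi_apply i) (measurable_pi_apply j)
  · exact MeasurableSet.iInter fun i =>
      measurableSet_lt (measurable_pi_apply i) measurable_const

lemma measurable_pF (n : ℕ) (h t : ℝ) : Measurable (pF n h t) := by
  apply Finset.measurable_prod
  intro i _
  by_cases hi : (i : ℕ) + 1 < n
  · simp only [dif_pos hi]
    exact ((measurable_pi_apply (⟨(i : ℕ) + 1, hi⟩ : Fin n)).sub (measurable_pi_apply i)).rpow_const' _
  · simp only [dif_neg hi]
    exact (measurable_const.sub (measurable_pi_apply _)).rpow_const' _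

lemma pF_base_pos {n : ℕ} {t : ℝ} {s : Fin n → ℝ} (hs : s ∈ SS n t) (i : Fin n) :
    0 < (if hi : (i : ℕ) + 1 < n then s ⟨(i : ℕ) + 1, hi⟩ else t) - s i := by
  obtain ⟨h1, h2, h3⟩ := hs
  split_ifs with hi
  · have hlt : i < (⟨(i : ℕ) + 1, hi⟩ : Fin n) := Fin.lt_def.mpr (Nat.lt_succ_self _)
    linarith [h2 i ⟨(i : ℕ) + 1, hi⟩ hlt]
  · linarith [h3 i]

lemma pF_nonneg {n : ℕ} {t h : ℝ} {s : Fin n → ℝ} (hs : s ∈ SS n t) :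
    0 ≤ pF n h t s :=
  Finset.prod_nonneg fun i _ => Real.rpow_nonneg (pF_base_pos hs i).le h

lemma insertNth_zero_succ {n : ℕ} (x : ℝ) (u : Fin n → ℝ) (j : Fin n) :
    Fin.insertNth (α := fun _ => ℝ) 0 x u j.succ = u j := by
  have h := Fin.insertNth_apply_succAbove (α := fun _ => ℝ) (0 : Fin (n + 1)) x u j
  rwa [Fin.succAbove_zero] at h

lemma insertNth_zero_mk {n : ℕ} (x : ℝ) (u : Fin n → ℝ) (k : ℕ) (hk : k + 1 < n + 1) :
    Fin.insertNth (α := fun _ => ℝ) 0 x u ⟨k + 1, hk⟩ = u ⟨k, by omega⟩ := by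
  have : (⟨k + 1, hk⟩ : Fin (n + 1)) = (⟨k, by omega⟩ : Fin n).succ := rfl
  rw [this, insertNth_zero_succ]

lemma mem_SS_insertNth {n : ℕ} (hn : 1 ≤ n) (t x : ℝ) (u : Fin n → ℝ) :
    Fin.insertNth 0 x u ∈ SS (n + 1) t ↔
      (x ∈ Set.Ioo 0 (u ⟨0, hn⟩) ∧ u ∈ SS n t) := by
  constructor
  · rintro ⟨h1, h2, h3⟩
    refine ⟨⟨?_, ?_⟩, fun i => ?_, fun i j hij => ?_, fun i => ?_⟩
    · have := h1 0; rwa [Fin.insertNth_apply_same] at this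
    · have := h2 0 ((⟨0, hn⟩ : Fin n).succ) (Fin.succ_pos _)
      rwa [Fin.insertNth_apply_same, insertNth_zero_succ] at this
    · have := h1 i.succ; rwa [insertNth_zero_succ] at this
    · have := h2 i.succ j.succ (by simpa using hij)
      rwa [insertNth_zero_succ, insertNth_zero_succ] at this
    · have := h3 i.succ; rwa [insertNth_zero_succ] at this
  · rintro ⟨⟨hx0, hxu⟩, h1, h2, h3⟩
    have hle : ∀ k : Fin n, u ⟨0, hn⟩ ≤ u k := by
      intro k
      rcases eq_or_lt_of_le (Fin.le_def.mpr (Nat.zero_le _) : (⟨0, hn⟩ : Fin n) ≤ k) with he | hl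
      · rw [he]
      · exact (h2 _ _ hl).le
    refine ⟨fun i => ?_, fun i j hij => ?_, fun i => ?_⟩
    · induction i using Fin.cases with
      | zero => rwa [Fin.insertNth_apply_same]
      | succ j => rw [insertNth_zero_succ]; exact h1 j
    · induction j using Fin.cases with
      | zero => exact absurd hij (Fin.not_lt_zero _)
      | succ j =>
        induction i using Fin.cases with
        | zero =>
          rw [Fin.insertNth_apply_same, insertNth_zero_succ]
          exact lt_of_lt_of_le hxu (hle j)
        | succ i =>
          rw [insertNth_zero_succ, insertNth_zero_succ]
          exact h2 i j (by simpa using hij)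
    · induction i using Fin.cases with
      | zero =>
        rw [Fin.insertNth_apply_same]
        exact hxu.trans (h3 _)
      | succ j => rw [insertNth_zero_succ]; exact h3 j

lemma pF_insertNth {n : ℕ} (hn : 1 ≤ n) (h t x : ℝ) (u : Fin n → ℝ) :
    pF (n + 1) h t (Fin.insertNth 0 x u) = (u ⟨0, hn⟩ - x) ^ h * pF n h t u := by
  rw [pF, Fin.prod_univ_succ]
  congr 1
  · rw [dif_pos (by simp only [Fin.val_zero]; omega : ((0 : Fin (n + 1)) : ℕ) + 1 < n + 1)]
    rw [Fin.insertNth_apply_same]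
    simp only [Fin.val_zero]
    rw [insertNth_zero_mk x u 0 (by omega)]
  · rw [pF]
    apply Finset.prod_congr rfl
    intro j _
    by_cases hj : (j : ℕ) + 1 < n
    · rw [dif_pos (by simp only [Fin.val_succ]; omega :
        ((j.succ : Fin (n + 1)) : ℕ) + 1 < n + 1), dif_pos hj]
      rw [insertNth_zero_succ]
      simp only [Fin.val_succ]
      rw [insertNth_zero_mk x u ((j : ℕ) + 1) (by omega)]
    · rw [dif_neg (by simp only [Fin.val_succ]; omega :
        ¬ ((j.succ : Fin (n + 1)) : ℕ) + 1 < n + 1), dif_neg hj]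
      rw [insertNth_zero_succ]

lemma measurable_FF (n : ℕ) (hn : 1 ≤ n) (c h t : ℝ) :
    Measurable fun s : Fin n → ℝ => Set.indicator (SS n t)
      (fun s => ENNReal.ofReal (s ⟨0, hn⟩ ^ c * pF n h t s)) s := by
  apply Measurable.indicator _ (measurableSet_SS n t)
  exact (((measurable_pi_apply _).rpow_const' c).mul (measurable_pF n h t)).ennreal_ofReal

lemma simplex_aux (h t : ℝ) (hh : -1 < h) (ht : 0 < t) :
    ∀ n (hn : 1 ≤ n) (c : ℝ), -1 < c →
      (∫⁻ s : Fin n → ℝ, Set.indicator (SS n t)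
          (fun s => ENNReal.ofReal (s ⟨0, hn⟩ ^ c * pF n h t s)) s)
        = ENNReal.ofReal (Real.Gamma (c + 1) * Real.Gamma (h + 1) ^ n * t ^ (c + n * (h + 1))
            / Real.Gamma (c + 1 + n * (h + 1))) := by
  intro n hn
  induction n, hn using Nat.le_induction with
  | base =>
    intro c hc
    have h0 : (⟨0, Nat.one_pos⟩ : Fin 1) = 0 := Subsingleton.elim _ _
    have hkey : ∀ s : Fin 1 → ℝ, Set.indicator (SS 1 t)
        (fun s => ENNReal.ofReal (s ⟨0, Nat.one_pos⟩ ^ c * pF 1 h t s)) s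
        = Set.indicator (Set.Ioo 0 t) (fun y => ENNReal.ofReal (y ^ c * (t - y) ^ h)) (s 0) := by
      intro s
      have hmem : s ∈ SS 1 t ↔ s 0 ∈ Set.Ioo 0 t := by
        constructor
        · rintro ⟨h1, _, h3⟩; exact ⟨h1 0, h3 0⟩
        · rintro ⟨ha, hb⟩
          refine ⟨fun i => ?_, fun i j hij => ?_, fun i => ?_⟩
          · rw [Subsingleton.elim i 0]; exact ha
          · rw [Subsingleton.elim i j] at hij; exact absurd hij (lt_irrefl _)
          · rw [Subsingleton.elim i 0]; exact hb
      have hpf : pF 1 h t s = (t - s 0) ^ h := by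
        rw [pF, Fin.prod_univ_one, dif_neg (by simp only [Fin.val_zero]; omega)]
      by_cases hs : s ∈ SS 1 t
      · rw [Set.indicator_of_mem hs, Set.indicator_of_mem (hmem.mp hs), hpf, h0]
      · rw [Set.indicator_of_notMem hs, Set.indicator_of_notMem (fun hc => hs (hmem.mpr hc))]
    simp_rw [hkey]
    have hG : Measurable fun y : ℝ =>
        Set.indicator (Set.Ioo 0 t) (fun y => ENNReal.ofReal (y ^ c * (t - y) ^ h)) y := by
      apply Measurable.indicator _ measurableSet_Ioo
      exact ((measurable_id.rpow_const' c).mul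
        ((measurable_const.sub measurable_id).rpow_const' h)).ennreal_ofReal
    have hmp := volume_preserving_funUnique (Fin 1) ℝ
    rw [show (fun s : Fin 1 → ℝ => Set.indicator (Set.Ioo 0 t)
          (fun y => ENNReal.ofReal (y ^ c * (t - y) ^ h)) (s 0))
        = fun s : Fin 1 → ℝ => Set.indicator (Set.Ioo 0 t)
          (fun y => ENNReal.ofReal (y ^ c * (t - y) ^ h))
          (MeasurableEquiv.funUnique (Fin 1) ℝ s) from rfl]
    refine (hmp.lintegral_comp hG).trans ?_; rw [lintegral_beta hc hh ht]
    congr 1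
    push_cast
    rw [show c + 1 + 1 * (h + 1) = c + h + 2 by ring, show c + 1 * (h + 1) = c + h + 1 by ring,
      pow_one]
    ring
  | succ n hn ih =>
    intro c hc
    have hc' : (-1:ℝ) < c + h + 1 := by linarith
    have hGpos : 0 < Real.Gamma (c + h + 2) := Real.Gamma_pos_of_pos (by linarith)
    have hBnn : 0 ≤ Real.Gamma (c + 1) * Real.Gamma (h + 1) / Real.Gamma (c + h + 2) :=
      div_nonneg (mul_nonneg (Real.Gamma_pos_of_pos (by linarith)).le
        (Real.Gamma_pos_of_pos (by linarith)).le) hGpos.le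
    have hmeasF := measurable_FF (n + 1) (by omega) c h t
    have hmp := (volume_preserving_piFinSuccAbove (fun _ : Fin (n + 1) => ℝ) 0).symm _
    have key1 : (∫⁻ s : Fin (n + 1) → ℝ, Set.indicator (SS (n + 1) t)
          (fun s => ENNReal.ofReal (s ⟨0, by omega⟩ ^ c * pF (n + 1) h t s)) s)
        = ∫⁻ p : ℝ × (Fin n → ℝ), Set.indicator (SS (n + 1) t)
            (fun s => ENNReal.ofReal (s ⟨0, by omega⟩ ^ c * pF (n + 1) h t s))
            (Fin.insertNth 0 p.1 p.2) := by
      exact (hmp.lintegral_comp hmeasF).symm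
    have key1b : (∫⁻ p : ℝ × (Fin n → ℝ), Set.indicator (SS (n + 1) t)
          (fun s => ENNReal.ofReal (s ⟨0, by omega⟩ ^ c * pF (n + 1) h t s))
          (Fin.insertNth 0 p.1 p.2))
        = ∫⁻ u : Fin n → ℝ, ∫⁻ x : ℝ, Set.indicator (SS (n + 1) t)
            (fun s => ENNReal.ofReal (s ⟨0, by omega⟩ ^ c * pF (n + 1) h t s))
            (Fin.insertNth 0 x u) := by
      rw [Measure.volume_eq_prod]
      exact lintegral_prod_symm _
        ((hmeasF.comp (MeasurableEquiv.piFinSuccAbove (fun _ : Fin (n + 1) => ℝ)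
          0).symm.measurable).aemeasurable)
    rw [key1, key1b]
    have key2 : ∀ u : Fin n → ℝ, (∫⁻ x : ℝ, Set.indicator (SS (n + 1) t)
          (fun s => ENNReal.ofReal (s ⟨0, by omega⟩ ^ c * pF (n + 1) h t s))
          (Fin.insertNth 0 x u))
        = ENNReal.ofReal (Real.Gamma (c + 1) * Real.Gamma (h + 1) / Real.Gamma (c + h + 2)) *
          Set.indicator (SS n t)
            (fun u => ENNReal.ofReal (u ⟨0, hn⟩ ^ (c + h + 1) * pF n h t u)) u := by
      intro u
      by_cases hu : u ∈ SS n t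
      · have hu0 : 0 < u ⟨0, hn⟩ := hu.1 _
        have hpfnn : 0 ≤ pF n h t u := pF_nonneg hu
        have hptws : ∀ x : ℝ, Set.indicator (SS (n + 1) t)
              (fun s => ENNReal.ofReal (s ⟨0, by omega⟩ ^ c * pF (n + 1) h t s))
              (Fin.insertNth 0 x u)
            = Set.indicator (Set.Ioo 0 (u ⟨0, hn⟩))
                (fun x => ENNReal.ofReal (x ^ c * (u ⟨0, hn⟩ - x) ^ h)) x
                * ENNReal.ofReal (pF n h t u) := by
          intro x
          by_cases hx : x ∈ Set.Ioo 0 (u ⟨0, hn⟩)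
          · rw [Set.indicator_of_mem hx,
              Set.indicator_of_mem ((mem_SS_insertNth hn t x u).mpr ⟨hx, hu⟩)]
            rw [show (⟨0, by omega⟩ : Fin (n + 1)) = 0 from rfl]
            rw [Fin.insertNth_apply_same, pF_insertNth hn]
            rw [← ENNReal.ofReal_mul (mul_nonneg (Real.rpow_nonneg hx.1.le c)
              (Real.rpow_nonneg (by linarith [hx.2] : (0:ℝ) ≤ u ⟨0, hn⟩ - x) h))]
            congr 1
            ring
          · rw [Set.indicator_of_notMem hx, Set.indicator_of_notMem, zero_mul]
            intro hcmem
            exact hx ((mem_SS_insertNth hn t x u).mp hcmem).1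
        simp_rw [hptws]
        rw [lintegral_mul_const' _ _ ENNReal.ofReal_ne_top, lintegral_beta hc hh hu0,
          Set.indicator_of_mem hu, ENNReal.ofReal_mul hBnn, mul_assoc,
          ← ENNReal.ofReal_mul (Real.rpow_nonneg hu0.le _)]
      · rw [Set.indicator_of_notMem hu, mul_zero]
        have hz : ∀ x : ℝ, Set.indicator (SS (n + 1) t)
            (fun s => ENNReal.ofReal (s ⟨0, by omega⟩ ^ c * pF (n + 1) h t s))
            (Fin.insertNth 0 x u) = 0 := by
          intro x
          apply Set.indicator_of_notMem
          intro hcmem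
          exact hu ((mem_SS_insertNth hn t x u).mp hcmem).2
        simp_rw [hz]
        exact lintegral_zero
    simp_rw [key2]
    rw [lintegral_const_mul' _ _ ENNReal.ofReal_ne_top, ih (c + h + 1) hc',
      ← ENNReal.ofReal_mul hBnn]
    congr 1
    rw [show c + h + 1 + 1 = c + h + 2 by ring]
    rw [show c + (↑(n + 1) : ℝ) * (h + 1) = c + h + 1 + ↑n * (h + 1) by push_cast; ring]
    rw [show c + 1 + (↑(n + 1) : ℝ) * (h + 1) = c + h + 2 + ↑n * (h + 1) by push_cast; ring]
    rw [pow_succ, div_mul_div_comm]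
    rw [show Real.Gamma (c + 1) * Real.Gamma (h + 1) *
          (Real.Gamma (c + h + 2) * Real.Gamma (h + 1) ^ n * t ^ (c + h + 1 + ↑n * (h + 1)))
        = Real.Gamma (c + h + 2) * (Real.Gamma (c + 1) * (Real.Gamma (h + 1) ^ n
            * Real.Gamma (h + 1)) * t ^ (c + h + 1 + ↑n * (h + 1))) by ring]
    rw [mul_div_mul_left _ _ hGpos.ne']

theorem simplex_integral (n : ℕ) (hn : 1 ≤ n) (h t : ℝ) (hh : -1 < h) (ht : 0 < t) :
    (∫ s : Fin n → ℝ in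
        {s : Fin n → ℝ | (∀ i, 0 < s i) ∧ (∀ i j : Fin n, i < j → s i < s j) ∧ ∀ i, s i < t},
      ∏ i : Fin n,
        ((if hi : (i : ℕ) + 1 < n then s ⟨(i : ℕ) + 1, hi⟩ else t) - s i) ^ h)
      = Real.Gamma (1 + h) ^ n * t ^ ((n : ℝ) * (1 + h))
          / Real.Gamma ((n : ℝ) * (1 + h) + 1) := by
  have hS := measurableSet_SS n t
  have hmain := simplex_aux h t hh ht n hn 0 (by norm_num)
  simp only [Real.rpow_zero, one_mul] at hmain
  have hnn : 0 ≤ᵐ[volume.restrict (SS n t)] fun s : Fin n → ℝ => pF n h t s :=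
    (ae_restrict_iff' hS).2 (Filter.Eventually.of_forall fun s hs => pF_nonneg hs)
  have hm : AEStronglyMeasurable (fun s : Fin n → ℝ => pF n h t s)
      (volume.restrict (SS n t)) := (measurable_pF n h t).aestronglyMeasurable
  have hpos : 0 ≤ Real.Gamma (0 + 1) * Real.Gamma (h + 1) ^ n * t ^ ((0:ℝ) + ↑n * (h + 1))
      / Real.Gamma (0 + 1 + ↑n * (h + 1)) := by
    have h1 : (0:ℝ) < h + 1 := by linarith
    have h2 : (0:ℝ) ≤ ↑n * (h + 1) := mul_nonneg (Nat.cast_nonneg n) h1.le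
    exact div_nonneg (mul_nonneg (mul_nonneg (Real.Gamma_pos_of_pos (by norm_num)).le
        (pow_nonneg (Real.Gamma_pos_of_pos h1).le n)) (Real.rpow_pos_of_pos ht _).le)
      (Real.Gamma_pos_of_pos (by linarith)).le
  calc (∫ s in SS n t, pF n h t s)
      = (∫⁻ s in SS n t, ENNReal.ofReal (pF n h t s)).toReal :=
        integral_eq_lintegral_of_nonneg_ae hnn hm
    _ = (∫⁻ s : Fin n → ℝ, Set.indicator (SS n t)
          (fun s => ENNReal.ofReal (pF n h t s)) s).toReal := by
        rw [lintegral_indicator hS]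
    _ = Real.Gamma (1 + h) ^ n * t ^ ((n : ℝ) * (1 + h))
          / Real.Gamma ((n : ℝ) * (1 + h) + 1) := by
        rw [hmain, ENNReal.toReal_ofReal hpos]
        rw [show (0:ℝ) + 1 = 1 by ring, Real.Gamma_one, one_mul]
        rw [show (0:ℝ) + ↑n * (h + 1) = ↑n * (1 + h) by ring]
        rw [show (1:ℝ) + ↑n * (h + 1) = ↑n * (1 + h) + 1 by ring]
        rw [show h + 1 = 1 + h by ring]
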